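/- Let G be a finite group that is not simple and has a unique minimal normal subgroup A which is nonabelian. Then any chief series of G has at least 2 non-Frattini factors and at least 1 nonabelian factor. -/

import Mathlib

/-- A chief factor `X/Y` is Frattini iff `X` is contained in every maximal subgroup
of `G` containing `Y` (equivalently `X/Y ≤ Frat(G/Y)`). -/
def IsFrattiniFactor {G : Type*} [Group G] (Y X : Subgroup G) : Prop :=
  ∀ M : Subgroup G, IsCoatom M → Y ≤ M → X ≤ M

theorem chief_series_of_monolithic_nonabelian
    (G : Type*) [Group G] [Finite G]
    (hnotsimple : ¬ IsSimpleGroup G)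
    (A : Subgroup G) (hAnorm : A.Normal) (hAne : A ≠ ⊥)
    (hmin : ∀ N : Subgroup G, N.Normal → N ≠ ⊥ → A ≤ N)
    (hna : ¬ ∀ a b : A, a * b = b * a)
    (n : ℕ) (c : Fin (n + 1) → Subgroup G)
    (hmono : Monotone c) (h0 : c 0 = ⊥) (hlast : c (Fin.last n) = ⊤)
    (hnorm : ∀ i, (c i).Normal)
    (hchief : ∀ i : Fin n, c i.castSucc < c i.succ ∧
      ∀ N : Subgroup G, N.Normal → c i.castSucc ≤ N → N ≤ c i.succ →
        N = c i.castSucc ∨ N = c i.succ) :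
    2 ≤ Nat.card {i : Fin n // ¬ IsFrattiniFactor (c i.castSucc) (c i.succ)} ∧
    1 ≤ Nat.card {i : Fin n //
      ∃ x ∈ c i.succ, ∃ y ∈ c i.succ, x * y * x⁻¹ * y⁻¹ ∉ c i.castSucc} := by
  haveI := hAnorm
  obtain ⟨a0, ha0⟩ := Subgroup.ne_bot_iff_exists_ne_one.mp hAne
  haveI : Nontrivial G := ⟨(a0 : G), 1, fun h => ha0 (Subtype.ext h)⟩
  -- n ≥ 2
  obtain _ | _ | m := n
  · exact absurd (h0 ▸ hlast) bot_ne_top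
  · exfalso
    refine hnotsimple ⟨fun N hN => ?_⟩
    have h := (hchief 0).2 N hN
    have e0 : (Fin.castSucc (0 : Fin 1)) = (0 : Fin 2) := rfl
    have e1 : (Fin.succ (0 : Fin 1)) = Fin.last 1 := rfl
    rw [e0, e1, h0, hlast] at h
    exact h bot_le le_top
  set i0 : Fin (m + 2) := 0 with hi0
  set iL : Fin (m + 2) := Fin.last (m + 1) with hiL
  have hc0 : c i0.castSucc = ⊥ := by
    have : (Fin.castSucc (0 : Fin (m + 2))) = (0 : Fin (m + 3)) := rfl
    rw [hi0, this, h0]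
  have hcL : c iL.succ = ⊤ := by
    have : (Fin.succ (Fin.last (m + 1))) = Fin.last (m + 2) := rfl
    rw [hiL, this, hlast]
  -- first factor equals A
  have hA1 : c i0.succ = A := by
    have hlt := (hchief i0).1
    rw [hc0] at hlt
    have hle : A ≤ c i0.succ := hmin _ (hnorm _) (by
      intro h; rw [h] at hlt; exact lt_irrefl _ hlt)
    rcases (hchief i0).2 A hAnorm (hc0 ▸ bot_le) hle with h | h
    · exact absurd (h.trans hc0) hAne
    · exact h.symm
  -- A is perfect: ⁅A,A⁆ = A
  have hab : ∃ a b : A, a * b ≠ b * a := by push_neg at hna; exact hna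
  obtain ⟨a, b, hab⟩ := hab
  have hDle : ⁅A, A⁆ ≤ A := Subgroup.commutator_le_left A A
  have hDne : ⁅A, A⁆ ≠ ⊥ := by
    intro h
    refine hab (Subtype.ext ?_)
    have := (Subgroup.commutator_le.mp h.le) a a.2 b b.2
    rw [Subgroup.mem_bot, commutatorElement_eq_one_iff_mul_comm] at this
    exact_mod_cast this
  have hD : ⁅A, A⁆ = A := le_antisymm hDle (hmin _ inferInstance hDne)
  -- derived series of A is constantly ⊤
  have hcommA : commutator A = ⊤ := by
    apply Subgroup.map_injective (Subgroup.subtype_injective A)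
    rw [commutator_def, Subgroup.map_commutator]
    have htop : Subgroup.map A.subtype ⊤ = A := by
      rw [← MonoidHom.range_eq_map, Subgroup.range_subtype]
    rw [htop, hD]
  have hds : ∀ k, derivedSeries A k = ⊤ := by
    intro k
    induction k with
    | zero => exact derivedSeries_zero A
    | succ k ih => rw [derivedSeries_succ, ih, ← commutator_def, hcommA]
  -- first factor is non-Frattini
  have hnF0 : ¬ IsFrattiniFactor (c i0.castSucc) (c i0.succ) := by
    intro hF
    have hle : A ≤ frattini G :=
      le_iInf₂ fun M hM => hA1 ▸ hF M hM (hc0 ▸ bot_le)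
    haveI := frattini_nilpotent (G := G)
    haveI : Group.IsSolvable ↥(frattini G) := inferInstance
    haveI : Group.IsSolvable A := solvable_of_solvable_injective (Subgroup.inclusion_injective hle)
    exact not_solvable_of_mem_derivedSeries ha0 (fun k => by rw [hds k]; trivial) this
  -- last factor is non-Frattini
  have hnFL : ¬ IsFrattiniFactor (c iL.castSucc) (c iL.succ) := by
    intro hF
    have hlt := (hchief iL).1
    rw [hcL] at hlt
    rcases eq_top_or_exists_le_coatom (c iL.castSucc) with h | ⟨M, hM, hle⟩
    · exact hlt.ne h
    · exact hM.1 (top_le_iff.mp (hcL ▸ hF M hM hle))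
  have hne : i0 ≠ iL := by
    intro h
    have := congrArg Fin.val h
    simp [hi0, hiL, Fin.last] at this
  constructor
  · rw [show (2 : ℕ) = 1 + 1 from rfl]
    have : Nontrivial {i : Fin (m + 2) // ¬ IsFrattiniFactor (c i.castSucc) (c i.succ)} :=
      ⟨⟨i0, hnF0⟩, ⟨iL, hnFL⟩, fun h => hne (congrArg Subtype.val h)⟩
    exact Finite.one_lt_card
  · have : Nonempty {i : Fin (m + 2) //
        ∃ x ∈ c i.succ, ∃ y ∈ c i.succ, x * y * x⁻¹ * y⁻¹ ∉ c i.castSucc} := by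
      refine ⟨⟨i0, (a : G), hA1 ▸ a.2, (b : G), hA1 ▸ b.2, ?_⟩⟩
      rw [hc0, Subgroup.mem_bot]
      intro h
      rw [show ((a : G) * b * (a : G)⁻¹ * (b : G)⁻¹) = (open scoped commutatorElement in ⁅(a : G), (b : G)⁆) from rfl,
        commutatorElement_eq_one_iff_mul_comm] at h
      exact hab (Subtype.ext (by exact_mod_cast h))
    exact Nat.card_pos
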